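/- Let λ ∈ (0,1) and let k be a nonnegative integer with k+1 < 1/λ. Then Γ_λ(k+1) = Γ(k+1)/(1)_{k+2,λ} = k! / ((1−λ)(1−2λ)⋯(1−(k+1)λ)). -/

import Mathlib

open MeasureTheory Complex

/-- The degenerate gamma function, defined as an integral. -/
noncomputable def degGamma (l : ℝ) (s : ℂ) : ℂ :=
  ∫ t in Set.Ioi (0 : ℝ), ((1 + l * t : ℝ) : ℂ) ^ (-(1 / l) : ℂ) * (t : ℂ) ^ (s - 1)

open scoped Topology

open Set Filter in
private lemma degGamma_base (l b : ℝ) (hl : 0 < l) (hb : 1 < b) :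
    (∫ t in Set.Ioi (0:ℝ), (1 + l * t) ^ (-b)) = 1 / (l * (b - 1)) ∧
    MeasureTheory.IntegrableOn (fun t : ℝ => (1 + l * t) ^ (-b)) (Set.Ioi 0) := by
  have hne : l * (1 - b) ≠ 0 := by
    apply mul_ne_zero hl.ne'
    intro h; nlinarith
  have hderiv : ∀ x ∈ Ici (0:ℝ),
      HasDerivAt (fun t : ℝ => (1 + l * t) ^ (1-b) / (l * (1-b))) ((1 + l * x) ^ (-b)) x := by
    intro x hx
    have h1 : (0:ℝ) < 1 + l * x := by
      have : (0:ℝ) ≤ x := hx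
      nlinarith
    have hin : HasDerivAt (fun t : ℝ => 1 + l * t) l x := by
      simpa using ((hasDerivAt_id x).const_mul l).const_add 1
    have := (hin.rpow_const (p := 1 - b) (Or.inl h1.ne')).div_const (l * (1-b))
    have e1 : (1:ℝ) - b - 1 = -b := by ring
    rw [e1] at this
    refine this.congr_deriv ?_
    rw [div_eq_iff hne]; ring
  have hpos : ∀ x ∈ Ioi (0:ℝ), (0:ℝ) ≤ (1 + l * x) ^ (-b) := by
    intro x hx
    exact Real.rpow_nonneg (by nlinarith [mem_Ioi.mp hx]) _
  have htend : Tendsto (fun t : ℝ => (1 + l * t) ^ (1-b) / (l * (1-b))) atTop (𝓝 0) := by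
    have h1 : Tendsto (fun t : ℝ => 1 + l * t) atTop atTop := by
      apply tendsto_atTop_add_const_left
      exact (tendsto_id.const_mul_atTop hl)
    have h2 : Tendsto (fun t : ℝ => (1 + l * t) ^ (-(b-1))) atTop (𝓝 0) :=
      (tendsto_rpow_neg_atTop (by linarith)).comp h1
    have h3 : (1:ℝ) - b = -(b-1) := by ring
    rw [h3]
    simpa using h2.div_const (l * -(b-1))
  constructor
  · rw [integral_Ioi_of_hasDerivAt_of_nonneg' hderiv hpos htend]
    have h4 : b - 1 ≠ 0 := by intro h; nlinarith
    have h5 : (1:ℝ) - b ≠ 0 := by intro h; nlinarith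
    norm_num [Real.one_rpow]
    field_simp
    try ring
  · exact integrableOn_Ioi_deriv_of_nonneg' hderiv hpos htend

private lemma degGamma_bound (l : ℝ) (hl : 0 < l) (c : ℝ) (k : ℕ) (t : ℝ) (ht : 0 ≤ t) :
    (1 + l * t) ^ c * t ^ k ≤ (1 + l * t) ^ (c + k) / l ^ k := by
  have h1 : (0:ℝ) < 1 + l * t := by nlinarith
  have h2 : t ≤ (1 + l * t) / l := by rw [le_div_iff₀ hl]; nlinarith
  calc (1 + l * t) ^ c * t ^ k ≤ (1 + l * t) ^ c * ((1 + l * t) / l) ^ k := by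
        gcongr
    _ = (1 + l * t) ^ (c + k) / l ^ k := by
        rw [div_pow, Real.rpow_add h1, Real.rpow_natCast]; ring

open Set in
private lemma degGamma_integrable (l a : ℝ) (hl : 0 < l) (k : ℕ) (ha : (k:ℝ) + 1 < a) :
    MeasureTheory.IntegrableOn
      (fun t : ℝ => (1 + l * t) ^ (-a) * t ^ k) (Set.Ioi 0) := by
  have hbase := (degGamma_base l (a - k) hl (by linarith)).2
  refine Integrable.mono' (hbase.div_const (l ^ k)) ?_ ?_
  · have hc : ContinuousOn (fun t : ℝ => (1 + l * t) ^ (-a) * t ^ k) (Ioi 0) := by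
      apply ContinuousOn.mul
      · apply ContinuousOn.rpow_const
        · exact (continuous_const.add (continuous_const.mul continuous_id)).continuousOn
        · intro x hx
          left
          have : (0:ℝ) < x := hx
          positivity
      · exact (continuous_pow k).continuousOn
    exact hc.aestronglyMeasurable measurableSet_Ioi
  · filter_upwards [ae_restrict_mem measurableSet_Ioi] with t ht
    have ht' : (0:ℝ) ≤ t := (mem_Ioi.mp ht).le
    have h1 : (0:ℝ) < 1 + l * t := by nlinarith
    have hnn : (0:ℝ) ≤ (1 + l * t) ^ (-a) * t ^ k := by positivity
    rw [Real.norm_eq_abs, _root_.abs_of_nonneg hnn]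
    have := degGamma_bound l hl (-a) k t ht'
    have he : -a + (k:ℝ) = -(a - k) := by ring
    rw [he] at this
    exact this

open Set Filter in
private lemma degGamma_main (l : ℝ) (hl : 0 < l) :
    ∀ (k : ℕ) (a : ℝ), (k:ℝ) + 1 < a →
      (∫ t in Set.Ioi (0:ℝ), (1 + l * t) ^ (-a) * t ^ k)
        = (Nat.factorial k : ℝ) / (l ^ (k+1) * ∏ i ∈ Finset.range (k+1), (a - (i+1))) := by
  intro k
  induction k with
  | zero =>
    intro a ha
    simp only [Nat.cast_zero, zero_add] at ha
    have h := (degGamma_base l a hl ha).1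
    simp only [pow_zero, mul_one, pow_one, Finset.prod_range_one, Nat.factorial_zero,
      Nat.cast_one, Nat.cast_zero, zero_add]
    rw [h]
  | succ k ih =>
    intro a ha
    push_cast at ha
    have ha' : (k:ℝ) + 1 < a - 1 := by linarith
    have ha1 : (1:ℝ) < a - 1 := by
      have : (0:ℝ) ≤ (k:ℝ) := Nat.cast_nonneg k
      linarith
    have hne : l * (1 - a) ≠ 0 := by
      apply mul_ne_zero hl.ne'
      intro h; nlinarith
    have hane : a - 1 ≠ 0 := by intro h; nlinarith
    set c : ℝ := ((k:ℝ)+1) / (l * (a-1)) with hc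
    set G : ℝ → ℝ := fun t => t ^ (k+1) * (1 + l * t) ^ (1-a) / (l * (1-a)) with hG
    have hderiv : ∀ x ∈ Ici (0:ℝ), HasDerivAt G
        ((1 + l * x) ^ (-a) * x ^ (k+1) - c * ((1 + l * x) ^ (-(a-1)) * x ^ k)) x := by
      intro x hx
      have hx' : (0:ℝ) ≤ x := hx
      have h1 : (0:ℝ) < 1 + l * x := by nlinarith
      have hin : HasDerivAt (fun t : ℝ => 1 + l * t) l x := by
        simpa using ((hasDerivAt_id x).const_mul l).const_add 1
      have hrp := hin.rpow_const (p := 1 - a) (Or.inl h1.ne')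
      have hpow : HasDerivAt (fun t : ℝ => t ^ (k+1)) (((k:ℝ)+1) * x ^ k) x := by
        simpa using hasDerivAt_pow (k+1) x
      have := (hpow.mul hrp).div_const (l * (1-a))
      refine this.congr_deriv ?_
      have e1 : (1:ℝ) - a - 1 = -a := by ring
      have e2 : (1:ℝ) - a = -(a-1) := by ring
      rw [e1, e2]
      have e3 : (1 + l * x) ^ (-(a-1)) = (1 + l * x) ^ (-a) * (1 + l * x) := by
        rw [← Real.rpow_add_one h1.ne' (-a)]
        ring_nf
      rw [e3, hc]
      field_simp
      ring
    have hint1 := degGamma_integrable l a hl (k+1) (by push_cast; linarith)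
    have hint2 := degGamma_integrable l (a-1) hl k ha'
    have hf'int : IntegrableOn
        (fun x : ℝ => (1 + l * x) ^ (-a) * x ^ (k+1) - c * ((1 + l * x) ^ (-(a-1)) * x ^ k))
        (Ioi 0) := by
      have : IntegrableOn (fun x : ℝ => (1 + l * x) ^ (-a) * x ^ (k+1)) (Ioi 0) := by
        simpa using hint1
      exact this.sub (hint2.const_mul c)
    have htend : Tendsto G atTop (𝓝 0) := by
      have h1 : Tendsto (fun t : ℝ => 1 + l * t) atTop atTop := by
        apply tendsto_atTop_add_const_left
        exact (tendsto_id.const_mul_atTop hl)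
      have h2 : Tendsto (fun t : ℝ => (1 + l * t) ^ (-(a - ((k:ℝ)+2))) / l ^ (k+1))
          atTop (𝓝 0) := by
        have := ((tendsto_rpow_neg_atTop (y := a - ((k:ℝ)+2)) (by linarith)).comp h1).div_const
          (l ^ (k+1))
        simpa using this
      have hsq : Tendsto (fun t : ℝ => t ^ (k+1) * (1 + l * t) ^ (1-a)) atTop (𝓝 0) := by
        apply squeeze_zero' (g := fun t : ℝ => (1 + l * t) ^ (-(a - ((k:ℝ)+2))) / l ^ (k+1))
        · filter_upwards [eventually_ge_atTop (0:ℝ)] with t ht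
          have h1 : (0:ℝ) < 1 + l * t := by nlinarith
          positivity
        · filter_upwards [eventually_ge_atTop (0:ℝ)] with t ht
          have := degGamma_bound l hl (1-a) (k+1) t ht
          have he : (1:ℝ) - a + ((k+1:ℕ):ℝ) = -(a - ((k:ℝ)+2)) := by push_cast; ring
          rw [he] at this
          linarith [this]
        · exact h2
      simpa using hsq.div_const (l * (1-a))
    have key := integral_Ioi_of_hasDerivAt_of_tendsto' hderiv hf'int htend
    have hG0 : G 0 = 0 := by simp [hG]
    rw [hG0, sub_zero] at key
    have hsplit : (∫ x in Ioi (0:ℝ),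
        ((1 + l * x) ^ (-a) * x ^ (k+1) - c * ((1 + l * x) ^ (-(a-1)) * x ^ k)))
        = (∫ x in Ioi (0:ℝ), (1 + l * x) ^ (-a) * x ^ (k+1))
          - c * ∫ x in Ioi (0:ℝ), (1 + l * x) ^ (-(a-1)) * x ^ k := by
      rw [integral_sub hint1 (hint2.const_mul c), integral_const_mul]
    rw [hsplit] at key
    have hval : (∫ x in Ioi (0:ℝ), (1 + l * x) ^ (-a) * x ^ (k+1))
        = c * ((Nat.factorial k : ℝ) /
            (l ^ (k+1) * ∏ i ∈ Finset.range (k+1), ((a-1) - (i+1)))) := by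
      rw [← ih (a-1) ha']
      linarith [key]
    rw [hval]
    have hprod : ∏ i ∈ Finset.range (k+2), (a - ((i:ℝ)+1))
        = (∏ i ∈ Finset.range (k+1), ((a-1) - ((i:ℝ)+1))) * (a - 1) := by
      rw [Finset.prod_range_succ' (fun i => a - ((i:ℝ)+1))]
      congr 1
      · apply Finset.prod_congr rfl
        intro i _
        push_cast
        ring
      · norm_num
    have hprodne : (∏ i ∈ Finset.range (k+1), ((a-1) - ((i:ℝ)+1))) ≠ 0 := by
      apply Finset.prod_ne_zero_iff.mpr
      intro i hi
      have hik : (i:ℝ) ≤ (k:ℝ) := by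
        exact_mod_cast Nat.lt_succ_iff.mp (Finset.mem_range.mp hi)
      intro h; nlinarith
    rw [hprod, hc, Nat.factorial_succ]
    push_cast
    field_simp
    ring

theorem degGamma_nat_succ (l : ℝ) (hl : l ∈ Set.Ioo (0 : ℝ) 1)
    (k : ℕ) (hk : (k : ℝ) + 1 < 1 / l) :
    degGamma l ((k : ℂ) + 1) =
      ((Nat.factorial k) : ℂ) / ∏ j ∈ Finset.Icc 1 (k + 1), (1 - (j : ℂ) * l) := by
  obtain ⟨hl0, hl1⟩ := hl
  rw [degGamma]
  have hcongr : ∀ t ∈ Set.Ioi (0:ℝ),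
      ((1 + l * t : ℝ) : ℂ) ^ (-(1 / l) : ℂ) * (t : ℂ) ^ ((k:ℂ) + 1 - 1)
        = (((1 + l * t) ^ (-(1/l)) * t ^ k : ℝ) : ℂ) := by
    intro t ht
    have ht' : (0:ℝ) < t := ht
    have h1 : (0:ℝ) ≤ 1 + l * t := by nlinarith
    have e1 : ((k:ℂ) + 1 - 1) = ((k:ℕ):ℂ) := by ring
    rw [e1, Complex.cpow_natCast, ← Complex.ofReal_pow]
    have e2 : (-(1 / l) : ℂ) = ((-(1/l) : ℝ) : ℂ) := by push_cast; ring
    rw [e2, ← Complex.ofReal_cpow h1, ← Complex.ofReal_mul]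
  rw [setIntegral_congr_fun measurableSet_Ioi hcongr]
  have hcast : (∫ x in Set.Ioi (0:ℝ), (((1 + l * x) ^ (-(1/l)) * x ^ k : ℝ) : ℂ))
      = (((∫ x in Set.Ioi (0:ℝ), (1 + l * x) ^ (-(1/l)) * x ^ k) : ℝ) : ℂ) :=
    integral_ofReal
  rw [hcast, degGamma_main l hl0 k (1/l) hk]
  have hprod : l ^ (k+1) * ∏ i ∈ Finset.range (k+1), (1/l - ((i:ℝ)+1))
      = ∏ i ∈ Finset.range (k+1), (1 - ((i:ℝ)+1) * l) := by
    calc l ^ (k+1) * ∏ i ∈ Finset.range (k+1), (1/l - ((i:ℝ)+1))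
        = ∏ i ∈ Finset.range (k+1), (l * (1/l - ((i:ℝ)+1))) := by
          rw [Finset.prod_mul_distrib, Finset.prod_const, Finset.card_range]
      _ = ∏ i ∈ Finset.range (k+1), (1 - ((i:ℝ)+1) * l) := by
          apply Finset.prod_congr rfl
          intro i _
          field_simp
  rw [hprod]
  have hIcc : ∀ (f : ℕ → ℂ) (n : ℕ),
      ∏ j ∈ Finset.Icc 1 n, f j = ∏ i ∈ Finset.range n, f (i+1) := by
    intro f n
    induction n with
    | zero => simp
    | succ n ihn => rw [Finset.prod_range_succ, ← ihn, Finset.prod_Icc_succ_top (by omega)]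
  rw [hIcc (fun j => 1 - (j:ℂ) * l) (k+1)]
  push_cast
  rfl
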